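/- Weak backward round tripping of biparsers is preserved by bind: if p : Bp u v is weak backward round tripping and k v : Bp u w is weak backward round tripping for every v, then p >>= k is weak backward round tripping. -/

import Mathlib

/-- A biparser: a parser together with a printer. -/
structure Bp (u v : Type) where
  parse : List Char → v × List Char
  print : u → Option (v × List Char)

def Bp.ret {u v : Type} (x : v) : Bp u v :=
  ⟨fun s => (x, s), fun _ => some (x, [])⟩

def Bp.bind {u v w : Type} (p : Bp u v) (k : v → Bp u w) : Bp u w :=
  ⟨fun s => (k (p.parse s).1).parse (p.parse s).2,
   fun x => (p.print x).bind (fun vs =>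
     ((k vs.1).print x).map (fun ws => (ws.1, vs.2 ++ ws.2)))⟩

def Bp.comap {u u' v : Type} (f : u → Option u') (p : Bp u' v) : Bp u v :=
  ⟨p.parse, fun x => (f x).bind p.print⟩

/-- Weak backward round tripping. -/
def WeakBackward {u v : Type} (p : Bp u v) : Prop :=
  ∀ (x : u) (y : v) (s s' : List Char),
    p.print x = some (y, s) → p.parse (s ++ s') = (y, s')

/-- Weak forward round tripping. -/
def WeakForward {u v : Type} (p : Bp u v) : Prop :=
  ∀ (x : u) (y : v) (s0 s1 s01 : List Char),
    p.parse s01 = (y, s1) → p.print x = some (y, s0) → s01 = s0 ++ s1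

theorem weakBackward_bind (u v w : Type) (p : Bp u v) (k : v → Bp u w)
    (hp : WeakBackward p) (hk : ∀ y : v, WeakBackward (k y)) :
    WeakBackward (Bp.bind p k) := by
  intro x y s s' h
  simp only [Bp.bind, Option.bind_eq_some_iff, Option.map_eq_some_iff] at h
  obtain ⟨⟨a, sa⟩, hpa, ⟨b, sb⟩, hkb, heq⟩ := h
  cases heq
  simp only [Bp.bind, List.append_assoc, hp x a sa (sb ++ s') hpa]
  exact hk a x b sb s' hkb
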